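/- For real λ > 0 and M > 0, if N₁, N₂ > 0 satisfy N₁ ≤ N₂ and M ≤ N₁(1+λ) + N₂ (so that (2+λ)N₂ ≥ M), then N₁^{log_{λ+2}(2)} + N₂^{log_{λ+2}(2)} ≥ M^{log_{λ+2}(2)}. In particular ((M - N₂)/(λ+1))^{log_{λ+2}(2)} + N₂^{log_{λ+2}(2)} ≥ 2(M/(λ+2))^{log_{λ+2}(2)} = M^{log_{λ+2}(2)} when N₂ ≥ M/(2+λ). -/

import Mathlib

open Real

lemma key6 (lam M N₂ : ℝ) (hlam : 0 < lam) (hM : 0 < M)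
    (hlow : M / (2 + lam) ≤ N₂) (hhigh : N₂ ≤ M) :
    M ^ (Real.logb (lam + 2) 2) ≤
      ((M - N₂) / (lam + 1)) ^ (Real.logb (lam + 2) 2) +
        N₂ ^ (Real.logb (lam + 2) 2) := by
  set θ := Real.logb (lam + 2) 2 with hθ
  have hb1 : (1:ℝ) < lam + 2 := by linarith
  have hθpos : 0 < θ := Real.logb_pos hb1 (by norm_num)
  have hθlt1 : θ < 1 := by
    rw [hθ, Real.logb, div_lt_one (Real.log_pos hb1)]
    exact Real.log_lt_log (by norm_num) (by linarith)
  have hpow2 : (lam + 2) ^ θ = 2 := Real.rpow_logb (by linarith) (by linarith) (by norm_num)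
  set c := M / (lam + 2) with hc
  have hcpos : 0 < c := by positivity
  have hMc : M - c = c * (lam + 1) := by
    have h : c * (lam + 2) = M := by rw [hc]; exact div_mul_cancel₀ M (by linarith)
    linear_combination (-1:ℝ) * h
  have hMcpos : 0 < M - c := by rw [hMc]; positivity
  set s := (M - N₂) / (M - c) with hs
  have hs0 : 0 ≤ s := div_nonneg (by linarith) hMcpos.le
  have hs1 : s ≤ 1 := by
    rw [hs, div_le_one hMcpos]
    have : c ≤ N₂ := by
      rw [hc]; rw [show lam + 2 = 2 + lam by ring]; exact hlow
    linarith
  have hsM : s * (M - c) = M - N₂ := by rw [hs]; exact div_mul_cancel₀ _ hMcpos.ne'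
  have hN₂eq : N₂ = s * c + (1 - s) * M := by
    linear_combination hsM
  have haeq : (M - N₂) / (lam + 1) = s * c := by
    have : M - N₂ = s * (M - c) := hsM.symm
    rw [this, hMc]
    field_simp
  have hcθ : c ^ θ = M ^ θ / 2 := by
    rw [hc, Real.div_rpow hM.le (by linarith : (0:ℝ) ≤ lam + 2), hpow2]
  -- concavity
  have hconc := (Real.concaveOn_rpow hθpos.le hθlt1.le).2
    (Set.mem_Ici.mpr hcpos.le) (Set.mem_Ici.mpr hM.le) hs0 (by linarith : 0 ≤ 1 - s)
    (by ring)
  simp only [smul_eq_mul] at hconc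
  -- (s*c)^θ = s^θ * c^θ
  have hmul : (s * c) ^ θ = s ^ θ * c ^ θ := Real.mul_rpow hs0 hcpos.le
  have hsθ : s ≤ s ^ θ := by
    rcases eq_or_lt_of_le hs0 with h | h
    · rw [← h, Real.zero_rpow hθpos.ne']
    · calc s = s ^ (1:ℝ) := (Real.rpow_one s).symm
        _ ≤ s ^ θ := Real.rpow_le_rpow_of_exponent_ge h hs1 hθlt1.le
  have hMθ : M ^ θ = 2 * c ^ θ := by rw [hcθ]; ring
  rw [haeq, ← hN₂eq] at *
  have h1 : s * c ^ θ + (1 - s) * M ^ θ ≤ N₂ ^ θ := hconc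
  have h2 : s * c ^ θ ≤ s ^ θ * c ^ θ :=
    mul_le_mul_of_nonneg_right hsθ (Real.rpow_nonneg hcpos.le θ)
  rw [hmul]
  nlinarith [Real.rpow_nonneg hcpos.le θ]

theorem stmt6 (lam M N₁ N₂ : ℝ) (hlam : 0 < lam) (hM : 0 < M)
    (hN₁ : 0 < N₁) (hN₂ : 0 < N₂) (h12 : N₁ ≤ N₂)
    (hsum : M ≤ N₁ * (1 + lam) + N₂) :
    M ^ (Real.logb (lam + 2) 2) ≤
        N₁ ^ (Real.logb (lam + 2) 2) + N₂ ^ (Real.logb (lam + 2) 2) ∧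
    2 * (M / (lam + 2)) ^ (Real.logb (lam + 2) 2) = M ^ (Real.logb (lam + 2) 2) ∧
    (M / (2 + lam) ≤ N₂ → N₂ ≤ M →
      M ^ (Real.logb (lam + 2) 2) ≤
        ((M - N₂) / (lam + 1)) ^ (Real.logb (lam + 2) 2) +
          N₂ ^ (Real.logb (lam + 2) 2)) := by
  set θ := Real.logb (lam + 2) 2 with hθ
  have hb1 : (1:ℝ) < lam + 2 := by linarith
  have hθpos : 0 < θ := Real.logb_pos hb1 (by norm_num)
  have hθlt1 : θ < 1 := by
    rw [hθ, Real.logb, div_lt_one (Real.log_pos hb1)]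
    exact Real.log_lt_log (by norm_num) (by linarith)
  have hpow2 : (lam + 2) ^ θ = 2 := Real.rpow_logb (by linarith) (by linarith) (by norm_num)
  have heq : 2 * (M / (lam + 2)) ^ θ = M ^ θ := by
    rw [Real.div_rpow hM.le (by linarith : (0:ℝ) ≤ lam + 2), hpow2]
    field_simp
  refine ⟨?_, heq, fun hlow hhigh => key6 lam M N₂ hlam hM hlow hhigh⟩
  by_cases hcase : M ≤ N₂
  · have : M ^ θ ≤ N₂ ^ θ := Real.rpow_le_rpow hM.le hcase hθpos.le
    have : 0 ≤ N₁ ^ θ := Real.rpow_nonneg hN₁.le θ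
    linarith
  · push_neg at hcase
    have hlow : M / (2 + lam) ≤ N₂ := by
      rw [div_le_iff₀ (by linarith : (0:ℝ) < 2 + lam)]
      nlinarith
    have hkey := key6 lam M N₂ hlam hM hlow hcase.le
    have ha : (M - N₂) / (lam + 1) ≤ N₁ := by
      rw [div_le_iff₀ (by linarith : (0:ℝ) < lam + 1)]
      nlinarith
    have ha0 : 0 ≤ (M - N₂) / (lam + 1) := div_nonneg (by linarith) (by linarith)
    have : ((M - N₂) / (lam + 1)) ^ θ ≤ N₁ ^ θ := Real.rpow_le_rpow ha0 ha hθpos.le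
    linarith
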